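/- If there exists a parametric subtrace 𝒯'' of 𝒯 that is simulable in 𝒯', then 𝒯' is a derivation field for 𝒯: the composition of the subtrace projection (a derivation) with the simulation-induced total derivation is a derivation from Pref(𝒯) to Pref(𝒯'). -/

import Mathlib

def IsRun {P V R : Type*} (T : R → (P → V) → (P → V)) :
    (P → V) → List (R × (P → V)) → Prop
  | _, [] => True
  | s, (r, s') :: rest => T r s = s' ∧ IsRun T s' rest

def Traces {P V R : Type*} (T : R → (P → V) → (P → V)) (S0 : Set (P → V)) :
    Set ((P → V) × List (R × (P → V))) :=
  {t | t.1 ∈ S0 ∧ IsRun T t.1 t.2}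

def IsRunRel {S R : Type*} (T : S → R → S → Prop) :
    S → List (R × S) → Prop
  | _, [] => True
  | s, (r, s') :: rest => T s r s' ∧ IsRunRel T s' rest

def TracesRel {S R : Type*} (T : S → R → S → Prop) (S0 : Set S) :
    Set (S × List (R × S)) :=
  {t | t.1 ∈ S0 ∧ IsRunRel T t.1 t.2}

def projState {P V : Type*} (P' : Set P) (s : P → V) : ↥P' → V :=
  fun p => s p.1

open Classical in
/-- Projection on the parametric subtrace: restrict states to `P'` and
delete events whose action type is outside `R'`. -/
noncomputable def projTrace {P V R : Type*} (P' : Set P) (R' : Set R)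
    (t : (P → V) × List (R × (P → V))) :
    (↥P' → V) × List (R × (↥P' → V)) :=
  (projState P' t.1,
    (t.2.filter fun e => decide (e.1 ∈ R')).map fun e => (e.1, projState P' e.2))

def prefOf {S E : Type*} (t : S × List E) (i : ℕ) : S × List E :=
  (t.1, t.2.take i)

def ple {S E : Type*} (u v : S × List E) : Prop :=
  u.1 = v.1 ∧ u.2 <+: v.2

def IsDerivation {Sc Ec Sd Ed : Type*} (S0d : Set Sd)
    (D : Sc × List Ec → Sd × List Ed) (Dom : Set (Sc × List Ec)) : Prop :=
  ∀ tc ∈ Dom, ∃ ch : ℕ → Sc × List Ec,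
    ch (D tc).2.length = tc ∧
    (∀ i j, i ≤ j → j ≤ (D tc).2.length → ple (ch i) (ch j)) ∧
    (∀ i ≤ (D tc).2.length, ch i ∈ Dom ∧ D (ch i) = prefOf (D tc) i) ∧
    (D (ch 0)).1 ∈ S0d

/-- Corollary: if a parametric subtrace `𝒯''` of `𝒯` (given by `P'`, `R'`,
`T'`) is simulable in `𝒯'` (given by `Td`, `S0d`, via the bijection `h`
between `R'` and the action types of `𝒯'` and the state map `d`), then the
composition of the subtrace projection with the simulation-induced map is a
derivation from `Pref(𝒯)` to `Pref(𝒯')`: `𝒯'` is a derivation field for `𝒯`. -/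
lemma isRun_take {P V R : Type*} (T : R → (P → V) → (P → V)) :
    ∀ (l : List (R × (P → V))) (s : P → V) (k : ℕ), IsRun T s l → IsRun T s (l.take k)
  | [], s, k, _ => by simp [IsRun]
  | (r, s') :: rest, s, 0, _ => trivial
  | (r, s') :: rest, s, k+1, hr => ⟨hr.1, isRun_take T rest s' k hr.2⟩

lemma filter_take_eq {α : Type*} (p : α → Bool) (l : List α) (k i : ℕ)
    (hc : ((l.take k).filter p).length = i) :
    (l.take k).filter p = (l.filter p).take i := by
  have hpre : (l.take k).filter p <+: l.filter p := (List.take_prefix k l).filter p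
  rw [List.prefix_iff_eq_take.mp hpre, hc]

lemma count_succ_le {α : Type*} (p : α → Bool) (l : List α) (k : ℕ) :
    ((l.take (k+1)).filter p).length ≤ ((l.take k).filter p).length + 1 := by
  rw [List.take_succ, List.filter_append, List.length_append]
  have : (l[k]?.toList.filter p).length ≤ 1 := by
    cases l[k]? with
    | none => simp
    | some a => simp [List.filter]; cases p a <;> simp
  omega

open Classical in
lemma run_sim {P V R : Type*} {Sd Rd : Type*}
    (T : R → (P → V) → (P → V)) (P' : Set P) (R' : Set R)
    (T' : R → (↥P' → V) → (↥P' → V))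
    (hR' : ∀ r ∈ R', ∀ s : P → V, projState P' (T r s) = T' r (projState P' s))
    (hRout : ∀ r ∉ R', ∀ s : P → V, projState P' (T r s) = projState P' s)
    (Td : Sd → Rd → Sd → Prop) (h : R → Rd) (d : (↥P' → V) → Sd)
    (hsim : ∀ r ∈ R', ∀ s : ↥P' → V, Td (d s) (h r) (d (T' r s))) :
    ∀ (l : List (R × (P → V))) (s : P → V), IsRun T s l →
      IsRunRel Td (d (projState P' s))
        (((l.filter fun e => decide (e.1 ∈ R')).map fun e => (e.1, projState P' e.2)).map
          fun e => (h e.1, d e.2))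
  | [], s, _ => trivial
  | (r, s') :: rest, s, hr => by
    obtain ⟨hT, hrest⟩ := hr
    by_cases hmem : r ∈ R'
    · have hs' : projState P' s' = T' r (projState P' s) := by rw [← hT]; exact hR' r hmem s
      simp only [List.filter_cons, decide_eq_true hmem, List.map_cons]
      refine ⟨?_, run_sim T P' R' T' hR' hRout Td h d hsim rest s' hrest⟩
      simp only [hs']
      exact hsim r hmem (projState P' s)
    · have hs' : projState P' s' = projState P' s := by rw [← hT]; exact hRout r hmem s
      simp only [List.filter_cons, decide_eq_false hmem, if_neg, Bool.false_eq_true,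
        not_false_iff]
      have := run_sim T P' R' T' hR' hRout Td h d hsim rest s' hrest
      rwa [hs'] at this

open Classical in
theorem subtrace_simulable_gives_derivation_field {P V R : Type*} {Sd Rd : Type*}
    (T : R → (P → V) → (P → V)) (S0 : Set (P → V))
    (P' : Set P) (R' : Set R)
    (T' : R → (↥P' → V) → (↥P' → V))
    (hR' : ∀ r ∈ R', ∀ s : P → V, projState P' (T r s) = T' r (projState P' s))
    (hRout : ∀ r ∉ R', ∀ s : P → V, projState P' (T r s) = projState P' s)
    (Td : Sd → Rd → Sd → Prop) (S0d : Set Sd)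
    (h : R → Rd) (hbij : Set.BijOn h R' Set.univ)
    (d : (↥P' → V) → Sd)
    (hd0 : ∀ s0 ∈ S0, d (projState P' s0) ∈ S0d)
    (hsim : ∀ r ∈ R', ∀ s : ↥P' → V, Td (d s) (h r) (d (T' r s))) :
    IsDerivation S0d
      (fun t => ((fun u : (↥P' → V) × List (R × (↥P' → V)) =>
          (d u.1, u.2.map fun e => (h e.1, d e.2))) (projTrace P' R' t)))
      (Traces T S0) ∧
    (∀ t ∈ Traces T S0,
      ((fun u : (↥P' → V) × List (R × (↥P' → V)) =>
          (d u.1, u.2.map fun e => (h e.1, d e.2))) (projTrace P' R' t))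
        ∈ TracesRel Td S0d) := by
  constructor
  · rintro ⟨s0, l⟩ ⟨hs0, hrun⟩
    set p : R × (P → V) → Bool := fun e => decide (e.1 ∈ R') with hp
    set n : ℕ := (l.filter p).length with hn
    set c : ℕ → ℕ := fun k => ((l.take k).filter p).length with hc
    have hfull : c l.length = n := by simp [hc, List.take_length, hn]
    have hex : ∀ i, i ≤ n → ∃ k, i ≤ c k := fun i hi => ⟨l.length, hfull ▸ hi⟩
    set g : ℕ → ℕ := fun i => if hi : i ≤ n then Nat.find (hex i hi) else l.length with hg
    have hci : ∀ i, i ≤ n → c (g i) = i := by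
      intro i hi
      have hge : i ≤ c (g i) := by
        simp only [hg, dif_pos hi]; exact Nat.find_spec (hex i hi)
      have hle : c (g i) ≤ i := by
        simp only [hg, dif_pos hi] at hge ⊢
        cases heq : Nat.find (hex i hi) with
        | zero => simp [hc]
        | succ m =>
          have hm : ¬ i ≤ c m := Nat.find_min (hex i hi) (by omega)
          have h2 := count_succ_le p l m
          simp only [hc] at hm ⊢
          omega
      omega
    have hgmono : ∀ i j, i ≤ j → j ≤ n → g i ≤ g j := by
      intro i j hij hj
      have hi : i ≤ n := le_trans hij hj
      have hcj := hci j hj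
      simp only [hg, dif_pos hi, dif_pos hj] at hcj ⊢
      exact Nat.find_min' (hex i hi) (by omega)
    refine ⟨fun i => if i = n then (s0, l) else (s0, l.take (g i)), ?_, ?_, ?_, ?_⟩
    · simp only [projTrace, List.length_map, ← hp, ← hn]
      simp
    · simp only [projTrace, List.length_map, ← hp, ← hn]
      intro i j hij hj
      by_cases hjn : j = n
      · subst hjn
        by_cases hin : i = n
        · subst hin
          rw [if_pos rfl]
          exact ⟨rfl, List.prefix_refl _⟩
        · rw [if_pos rfl, if_neg hin]
          exact ⟨rfl, List.take_prefix _ _⟩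
      · have hin : i ≠ n := fun hh => hjn (le_antisymm hj (hh ▸ hij))
        simp only [if_neg hin, if_neg hjn]
        exact ⟨rfl, List.take_prefix_take_left (hgmono i j hij hj)⟩
    · simp only [projTrace, List.length_map, ← hp, ← hn]
      intro i hi
      by_cases hin : i = n
      · subst hin
        rw [if_pos rfl]
        refine ⟨⟨hs0, hrun⟩, ?_⟩
        simp only [prefOf, projTrace]
        refine Prod.ext rfl ?_
        simp [← hp, ← hn]
      · rw [if_neg hin]
        refine ⟨⟨hs0, isRun_take T l s0 (g i) hrun⟩, ?_⟩
        simp only [prefOf, projTrace]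
        refine Prod.ext rfl ?_
        have hfe := filter_take_eq p l (g i) i (hci i hi)
        simp only [← hp, hfe, List.map_take]
    · have h1 : ((fun i => if i = n then (s0, l) else (s0, List.take (g i) l)) 0).1 = s0 := by
        by_cases h0 : (0 : ℕ) = n <;> simp [h0]
      show d (projState P'
        ((fun i => if i = n then (s0, l) else (s0, List.take (g i) l)) 0).1) ∈ S0d
      rw [h1]
      exact hd0 s0 hs0
  · rintro t ⟨hs0, hrun⟩
    exact ⟨hd0 t.1 hs0, run_sim T P' R' T' hR' hRout Td h d hsim t.2 t.1 hrun⟩
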